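/- (Estimate (eqccadd7) in the proof of the key Lemma 2.1.) Let φ_1, …, φ_N ∈ V span a subspace W, be b-orthonormal (b(φ_k, φ_l) = δ_{kl}), and satisfy a(φ_k, w) = λ_k·b(φ_k, w) for all w ∈ W with reals λ_1, …, λ_N, and let G : V → W denote the a-orthogonal projection onto W. Assume there is ε > 0 with ‖v − Gv‖ ≤ ε·⦀v − Gv⦀ for all v ∈ V. Let û ∈ V and λ̂ > 0 satisfy a(û, w) = λ̂·b(û, w) for all w ∈ W, and suppose there is Λ_sep ≥ 0 with λ̂ ≤ Λ_sep·|λ_k − λ̂| for every index k ≠ j, where j is a fixed index. Then ‖Gû − b(Gû, φ_j)·φ_j‖ ≤ Λ_sep·ε·⦀û − φ_j⦀. -/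

import Mathlib

open RealInnerProductSpace

/-- Estimate (eqccadd7) in the proof of the key Lemma 2.1.  With `b`-orthonormal
eigenvectors `φ_1, …, φ_N` spanning `W`, `G` the `a`-orthogonal projection onto `W`
(characterised by `Gv ∈ W` and `a(v − Gv, w) = 0` for all `w ∈ W`), the duality
estimate `‖v − Gv‖ ≤ ε·⦀v − Gv⦀`, an eigenvector `û` with `a(û, w) = λ̂ b(û, w)` on
`W`, and the separation `λ̂ ≤ Λ_sep·|λ_k − λ̂|` for all `k ≠ j`, one has
`‖Gû − b(Gû, φ_j)·φ_j‖ ≤ Λ_sep·ε·⦀û − φ_j⦀`. -/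
theorem estimate_eqccadd7
    {V : Type*} [NormedAddCommGroup V] [InnerProductSpace ℝ V]
    {H : Type*} [NormedAddCommGroup H] [InnerProductSpace ℝ H]
    (ι : V →ₗ[ℝ] H)
    (N : ℕ) (φ : Fin N → V) (lam : Fin N → ℝ)
    (W : Submodule ℝ V) (hspan : W = Submodule.span ℝ (Set.range φ))
    (horth : ∀ k l : Fin N, ⟪ι (φ k), ι (φ l)⟫ = if k = l then (1 : ℝ) else 0)
    (heig : ∀ k : Fin N, ∀ w ∈ W, ⟪φ k, w⟫ = lam k * ⟪ι (φ k), ι w⟫)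
    (G : V → V) (hGmem : ∀ v : V, G v ∈ W)
    (hGproj : ∀ v : V, ∀ w ∈ W, ⟪v - G v, w⟫ = 0)
    (ε : ℝ) (hε : 0 < ε)
    (hdual : ∀ v : V, ‖ι (v - G v)‖ ≤ ε * ‖v - G v‖)
    (uhat : V) (lamhat : ℝ) (hlamhat : 0 < lamhat)
    (huhateig : ∀ w ∈ W, ⟪uhat, w⟫ = lamhat * ⟪ι uhat, ι w⟫)
    (j : Fin N) (Λsep : ℝ) (hΛsep : 0 ≤ Λsep)
    (hsep : ∀ k : Fin N, k ≠ j → lamhat ≤ Λsep * |lam k - lamhat|) :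
    ‖ι (G uhat - ⟪ι (G uhat), ι (φ j)⟫ • φ j)‖ ≤ Λsep * ε * ‖uhat - φ j‖ := by
  classical
  have hON : Orthonormal ℝ (fun k : Fin N => ι (φ k)) := by
    rw [orthonormal_iff_ite]; exact horth
  have hφW : ∀ k : Fin N, φ k ∈ W := fun k => by
    rw [hspan]; exact Submodule.subset_span ⟨k, rfl⟩
  -- expansion of G uhat
  have hGu : G uhat ∈ Submodule.span ℝ (Set.range φ) := hspan ▸ hGmem uhat
  obtain ⟨d, hd⟩ := (Finsupp.mem_span_range_iff_exists_finsupp).mp hGu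
  set c : Fin N → ℝ := fun k => ⟪ι (G uhat), ι (φ k)⟫ with hc
  have hιGu : ι (G uhat) = ∑ k, d k • ι (φ k) := by
    rw [← hd, Finsupp.sum_fintype _ _ (by simp)]
    simp [map_sum, map_smul]
  have hck : ∀ k, c k = d k := by
    intro k
    rw [hc]
    simp only [hιGu]
    rw [real_inner_comm]
    simpa using hON.inner_right_fintype d k
  -- coefficient relation
  have hkey : ∀ k : Fin N, (lam k - lamhat) * c k
      = lamhat * ⟪ι (uhat - G uhat), ι (φ k)⟫ := by
    intro k
    have h1 := hGproj uhat (φ k) (hφW k)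
    rw [inner_sub_left] at h1
    have h2 : ⟪uhat, φ k⟫ = lamhat * ⟪ι uhat, ι (φ k)⟫ := huhateig (φ k) (hφW k)
    have h3 : ⟪G uhat, φ k⟫ = lam k * ⟪ι (G uhat), ι (φ k)⟫ := by
      rw [real_inner_comm (φ k) (G uhat), real_inner_comm (ι (φ k)) (ι (G uhat))]
      exact heig k (G uhat) (hGmem uhat)
    have h4 : lam k * c k = lamhat * ⟪ι uhat, ι (φ k)⟫ := by
      simp only [hc]
      rw [← h3]
      linarith
    have h5 : ⟪ι (uhat - G uhat), ι (φ k)⟫ = ⟪ι uhat, ι (φ k)⟫ - c k := by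
      simp only [hc]
      rw [map_sub, inner_sub_left]
    rw [h5]
    linear_combination h4
  have hcbound : ∀ k : Fin N, k ≠ j →
      |c k| ≤ Λsep * |⟪ι (uhat - G uhat), ι (φ k)⟫| := by
    intro k hk
    have hδ : 0 < |lam k - lamhat| := by
      rcases (abs_nonneg (lam k - lamhat)).lt_or_eq with h | h
      · exact h
      · exfalso; have := hsep k hk; rw [← h] at this; nlinarith
    have h6 : |lam k - lamhat| * |c k|
        = lamhat * |⟪ι (uhat - G uhat), ι (φ k)⟫| := by
      rw [← abs_mul, hkey k]
      rw [abs_mul, abs_of_pos hlamhat]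
    have h7 : |lam k - lamhat| * |c k|
        ≤ (Λsep * |lam k - lamhat|) * |⟪ι (uhat - G uhat), ι (φ k)⟫| := by
      rw [h6]
      exact mul_le_mul_of_nonneg_right (hsep k hk) (abs_nonneg _)
    have := (mul_le_mul_iff_right₀ hδ).mp (by linarith [h7] : |lam k - lamhat| * |c k| ≤ |lam k - lamhat| * (Λsep * |⟪ι (uhat - G uhat), ι (φ k)⟫|))
    linarith
  -- the vector in question
  have hcj : (⟪ι (G uhat), ι (φ j)⟫ : ℝ) = d j := hck j
  have hvec : ι (G uhat - (⟪ι (G uhat), ι (φ j)⟫ : ℝ) • φ j)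
      = ∑ k ∈ Finset.univ.erase j, d k • ι (φ k) := by
    rw [map_sub, map_smul, hcj, hιGu,
      ← Finset.sum_erase_add _ _ (Finset.mem_univ j)]
    abel
  -- norm squared
  have hns : ‖ι (G uhat - (⟪ι (G uhat), ι (φ j)⟫ : ℝ) • φ j)‖ ^ 2
      = ∑ k ∈ Finset.univ.erase j, d k ^ 2 := by
    rw [hvec, ← real_inner_self_eq_norm_sq, hON.inner_sum d d]
    simp [sq]
  -- Bessel
  have hbessel : ∑ k ∈ Finset.univ.erase j, ⟪ι (φ k), ι (uhat - G uhat)⟫ ^ 2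
      ≤ ‖ι (uhat - G uhat)‖ ^ 2 := by
    have := hON.sum_inner_products_le (s := Finset.univ.erase j) (ι (uhat - G uhat))
    simpa using this
  have hsum : ∑ k ∈ Finset.univ.erase j, d k ^ 2
      ≤ Λsep ^ 2 * ‖ι (uhat - G uhat)‖ ^ 2 := by
    calc ∑ k ∈ Finset.univ.erase j, d k ^ 2
        ≤ ∑ k ∈ Finset.univ.erase j,
            Λsep ^ 2 * ⟪ι (φ k), ι (uhat - G uhat)⟫ ^ 2 := by
          apply Finset.sum_le_sum
          intro k hk
          have hk' : k ≠ j := (Finset.mem_erase.mp hk).1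
          have h := hcbound k hk'
          rw [← hck k] at *
          have : |c k| ^ 2 ≤ (Λsep * |⟪ι (uhat - G uhat), ι (φ k)⟫|) ^ 2 :=
            pow_le_pow_left₀ (abs_nonneg _) h 2
          rw [hck k] at this ⊢
          calc d k ^ 2 = |c k| ^ 2 := by rw [hck k, sq_abs]
            _ ≤ (Λsep * |⟪ι (uhat - G uhat), ι (φ k)⟫|) ^ 2 := by
                rw [hck k] at *; exact this
            _ = Λsep ^ 2 * ⟪ι (φ k), ι (uhat - G uhat)⟫ ^ 2 := by
                rw [mul_pow, sq_abs, real_inner_comm]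
      _ = Λsep ^ 2 * ∑ k ∈ Finset.univ.erase j,
            ⟪ι (φ k), ι (uhat - G uhat)⟫ ^ 2 := by rw [Finset.mul_sum]
      _ ≤ Λsep ^ 2 * ‖ι (uhat - G uhat)‖ ^ 2 :=
          mul_le_mul_of_nonneg_left hbessel (sq_nonneg _)
  -- duality
  have hdual' : ‖ι (uhat - G uhat)‖ ≤ ε * ‖uhat - G uhat‖ := hdual uhat
  -- Pythagoras: ‖uhat - G uhat‖ ≤ ‖uhat - φ j‖
  have hpyth : ‖uhat - G uhat‖ ≤ ‖uhat - φ j‖ := by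
    have horthg : ⟪uhat - G uhat, G uhat - φ j⟫ = 0 :=
      hGproj uhat _ (Submodule.sub_mem W (hGmem uhat) (hφW j))
    have hdecomp : uhat - φ j = (uhat - G uhat) + (G uhat - φ j) := by abel
    have : ‖uhat - φ j‖ ^ 2 = ‖uhat - G uhat‖ ^ 2 + ‖G uhat - φ j‖ ^ 2 := by
      rw [hdecomp, norm_add_sq_real, horthg]; ring
    nlinarith [norm_nonneg (uhat - φ j), norm_nonneg (uhat - G uhat),
      sq_nonneg (‖G uhat - φ j‖)]
  -- combine
  have hRHS : (0:ℝ) ≤ Λsep * ε * ‖uhat - φ j‖ :=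
    mul_nonneg (mul_nonneg hΛsep hε.le) (norm_nonneg _)
  have hsq : ‖ι (G uhat - (⟪ι (G uhat), ι (φ j)⟫ : ℝ) • φ j)‖ ^ 2
      ≤ (Λsep * ε * ‖uhat - φ j‖) ^ 2 := by
    rw [hns]
    calc ∑ k ∈ Finset.univ.erase j, d k ^ 2
        ≤ Λsep ^ 2 * ‖ι (uhat - G uhat)‖ ^ 2 := hsum
      _ ≤ Λsep ^ 2 * (ε * ‖uhat - φ j‖) ^ 2 := by
          apply mul_le_mul_of_nonneg_left _ (sq_nonneg _)
          have h1 : ‖ι (uhat - G uhat)‖ ≤ ε * ‖uhat - φ j‖ := by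
            calc ‖ι (uhat - G uhat)‖ ≤ ε * ‖uhat - G uhat‖ := hdual'
              _ ≤ ε * ‖uhat - φ j‖ := mul_le_mul_of_nonneg_left hpyth hε.le
          exact pow_le_pow_left₀ (norm_nonneg _) h1 2
      _ = (Λsep * ε * ‖uhat - φ j‖) ^ 2 := by ring
  nlinarith [norm_nonneg (ι (G uhat - (⟪ι (G uhat), ι (φ j)⟫ : ℝ) • φ j)), hsq, hRHS]
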